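/- Let μ ∈ (0,1/2), r > 0, λ = 1/√5, and let γ : ℝ → ℝ³ be the helix γ(t) = (r cos t, r sin t, μ r t), with derivative γ'(t) = (−r sin t, r cos t, μ r). Then for every τ ∈ ℝ and every z ∈ ℝ one has ⟨γ'(τ), (0,0,z) − γ(τ)⟩ ≤ λ‖γ'(τ)‖‖(0,0,z) − γ(τ)‖; that is, the open cone of half-aperture arccos(1/√5) with vertex γ(τ) directed by γ'(τ) does not meet the z-axis. -/

import Mathlib

open scoped RealInnerProductSpace
open Set

/-- The helix `t ↦ (r cos t, r sin t, μ r t)` in `ℝ³`. -/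
noncomputable def helix (r μ t : ℝ) : EuclideanSpace ℝ (Fin 3) :=
  WithLp.toLp 2 ![r * Real.cos t, r * Real.sin t, μ * r * t]

/-- The derivative `t ↦ (−r sin t, r cos t, μ r)` of the helix. -/
noncomputable def helixD (r μ t : ℝ) : EuclideanSpace ℝ (Fin 3) :=
  WithLp.toLp 2 ![-(r * Real.sin t), r * Real.cos t, μ * r]

/-- A point `(0, 0, z)` of the `z`-axis in `ℝ³`. -/
def zAxisPt (z : ℝ) : EuclideanSpace ℝ (Fin 3) := WithLp.toLp 2 ![0, 0, z]

private lemma key_ineq (μ r s : ℝ) (h4 : 0 ≤ 1 - 4 * μ ^ 2) :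
    (μ * r * s) ^ 2 ≤ r ^ 2 * (1 + μ ^ 2) * (r ^ 2 + s ^ 2) / 5 := by
  nlinarith [mul_nonneg h4 (mul_nonneg (sq_nonneg r) (sq_nonneg s)),
    mul_nonneg (sq_nonneg r) (sq_nonneg r), mul_nonneg (sq_nonneg r) (sq_nonneg (r * μ))]

/-- For `μ ∈ (0,1/2)`, `r > 0` and `λ = 1/√5`, the open cone of
half-aperture `arccos(1/√5)` with vertex `γ(τ)` directed by `γ'(τ)` (where `γ` is the
helix) does not meet the `z`-axis. -/
theorem helix_cone_avoids_z_axis (μ r : ℝ) (hμ0 : 0 < μ) (hμ : μ < 1 / 2) (hr : 0 < r)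
    (τ z : ℝ) :
    ⟪helixD r μ τ, zAxisPt z - helix r μ τ⟫ ≤
      (1 / Real.sqrt 5) * ‖helixD r μ τ‖ * ‖zAxisPt z - helix r μ τ‖ := by
  set s : ℝ := z - μ * r * τ with hs
  have hcs : Real.cos τ ^ 2 + Real.sin τ ^ 2 = 1 := by
    rw [add_comm]; exact Real.sin_sq_add_cos_sq τ
  have hinner : ⟪helixD r μ τ, zAxisPt z - helix r μ τ⟫ = μ * r * s := by
    simp only [PiLp.inner_apply, RCLike.inner_apply, conj_trivial, Fin.sum_univ_three,
      PiLp.sub_apply, helixD, helix, zAxisPt, PiLp.toLp_apply, Matrix.cons_val_zero, Matrix.cons_val_one,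
      Matrix.head_cons, Matrix.cons_val_two, Matrix.tail_cons, hs]
    ring
  have hA : ‖helixD r μ τ‖ ^ 2 = r ^ 2 * (1 + μ ^ 2) := by
    rw [← real_inner_self_eq_norm_sq]
    simp only [PiLp.inner_apply, RCLike.inner_apply, conj_trivial, Fin.sum_univ_three,
      helixD, PiLp.toLp_apply, Matrix.cons_val_zero, Matrix.cons_val_one, Matrix.head_cons,
      Matrix.cons_val_two, Matrix.tail_cons]
    nlinarith [hcs]
  have hB : ‖zAxisPt z - helix r μ τ‖ ^ 2 = r ^ 2 + s ^ 2 := by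
    rw [← real_inner_self_eq_norm_sq]
    simp only [PiLp.inner_apply, RCLike.inner_apply, conj_trivial, Fin.sum_univ_three,
      PiLp.sub_apply, helix, zAxisPt, PiLp.toLp_apply, Matrix.cons_val_zero, Matrix.cons_val_one,
      Matrix.head_cons, Matrix.cons_val_two, Matrix.tail_cons, hs]
    nlinarith [hcs]
  rw [hinner]
  set A := ‖helixD r μ τ‖
  set B := ‖zAxisPt z - helix r μ τ‖
  have hAnn : 0 ≤ A := norm_nonneg _
  have hBnn : 0 ≤ B := norm_nonneg _
  have h5 : Real.sqrt 5 > 0 := Real.sqrt_pos.mpr (by norm_num)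
  have h5sq : Real.sqrt 5 ^ 2 = 5 := Real.sq_sqrt (by norm_num)
  rcases le_or_gt (μ * r * s) 0 with h | h
  · have h0 : 0 ≤ 1 / Real.sqrt 5 * A * B := by positivity
    exact h.trans h0
  · -- square both sides
    have hRHSnn : 0 ≤ 1 / Real.sqrt 5 * A * B := by positivity
    have hsq : (μ * r * s) ^ 2 ≤ (1 / Real.sqrt 5 * A * B) ^ 2 := by
      have : (1 / Real.sqrt 5 * A * B) ^ 2 = (A ^ 2 * B ^ 2) / 5 := by
        field_simp; rw [h5sq]; ring
      rw [this, hA, hB]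
      exact key_ineq μ r s (by nlinarith)
    nlinarith [hsq, hRHSnn, h]
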